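/- The stabilizer 2-Rényi entropy is invariant under Clifford unitaries: for every n, every Clifford unitary C on ℂ^(2^n), and every unit vector v ∈ ℂ^(2^n) with ψ = v vᴴ, one has M₂(C ψ Cᴴ) = M₂(ψ). -/

import Mathlib

noncomputable section
open Matrix

/-- The four single-qubit Pauli matrices I, X, Y, Z. -/
def pauli : Fin 4 → Matrix (Fin 2) (Fin 2) ℂ :=
  ![1, !![0, 1; 1, 0], !![0, -Complex.I; Complex.I, 0], !![1, 0; 0, -1]]

/-- An `n`-qubit Pauli string σ₁ ⊗ ⋯ ⊗ σₙ, given entrywise by the product of the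
entries of the single-qubit factors (the Kronecker product). -/
def pauliString (n : ℕ) (f : Fin n → Fin 4) :
    Matrix (Fin n → Fin 2) (Fin n → Fin 2) ℂ :=
  Matrix.of fun v w => ∏ i : Fin n, pauli (f i) (v i) (w i)

lemma trace_pauli_mul (a b : Fin 4) : (pauli a * pauli b).trace = if a = b then 2 else 0 := by
  fin_cases a <;> fin_cases b <;>
    simp [pauli, Matrix.trace_fin_two, Matrix.mul_apply, Fin.sum_univ_succ, Matrix.one_apply,
      Complex.ext_iff] <;> norm_num

lemma pauliString_mul (n : ℕ) (f g : Fin n → Fin 4) :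
    pauliString n f * pauliString n g =
      Matrix.of fun v w => ∏ i : Fin n, (pauli (f i) * pauli (g i)) (v i) (w i) := by
  ext v w
  simp only [pauliString, Matrix.mul_apply, Matrix.of_apply]
  rw [show (fun u : Fin n → Fin 2 => (∏ i, pauli (f i) (v i) (u i)) * ∏ i, pauli (g i) (u i) (w i))
      = fun u => ∏ i, pauli (f i) (v i) (u i) * pauli (g i) (u i) (w i) by
    funext u; rw [← Finset.prod_mul_distrib]]
  rw [← Fintype.prod_sum fun i b => pauli (f i) (v i) b * pauli (g i) b (w i)]

lemma trace_pauliString_mul (n : ℕ) (f g : Fin n → Fin 4) :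
    (pauliString n f * pauliString n g).trace = if f = g then (2 : ℂ) ^ n else 0 := by
  rw [pauliString_mul]
  have : (Matrix.of fun v w : Fin n → Fin 2 => ∏ i : Fin n, (pauli (f i) * pauli (g i)) (v i) (w i)).trace
      = ∏ i : Fin n, (pauli (f i) * pauli (g i)).trace := by
    simp only [Matrix.trace, Matrix.diag, Matrix.of_apply]
    rw [← Fintype.prod_sum fun i a => (pauli (f i) * pauli (g i)) a a]
  rw [this]
  simp only [trace_pauli_mul]
  by_cases h : f = g
  · subst h; simp
  · rw [if_neg h]
    obtain ⟨i, hi⟩ := Function.ne_iff.mp h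
    exact Finset.prod_eq_zero (Finset.mem_univ i) (if_neg hi)

/-- Rank-one density matrix v vᴴ. -/
def dm {ι : Type*} (v : ι → ℂ) : Matrix ι ι ℂ := Matrix.vecMulVec v (star v)

/-- Stabilizer 2-Rényi entropy of an `n`-qubit state. -/
def M2 (n : ℕ) (ψ : Matrix (Fin n → Fin 2) (Fin n → Fin 2) ℂ) : ℝ :=
  - Real.logb 2 ((1 / 2 ^ n) *
      ∑ f : Fin n → Fin 4, ‖(pauliString n f * ψ).trace‖ ^ 4)

/-- A unitary on `n` qubits is Clifford if it maps every Pauli string to a Pauli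
string up to a sign. -/
def IsClifford (n : ℕ) (C : Matrix (Fin n → Fin 2) (Fin n → Fin 2) ℂ) : Prop :=
  C ∈ Matrix.unitaryGroup (Fin n → Fin 2) ℂ ∧
    ∀ f : Fin n → Fin 4, ∃ (g : Fin n → Fin 4) (s : ℝ),
      (s = 1 ∨ s = -1) ∧ C * pauliString n f * Cᴴ = (s : ℂ) • pauliString n g

set_option maxHeartbeats 2000000 in
theorem clifford_invariance_of_stabilizer_entropy
    (n : ℕ) (C : Matrix (Fin n → Fin 2) (Fin n → Fin 2) ℂ) (hC : IsClifford n C)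
    (v : (Fin n → Fin 2) → ℂ) (hv : ∑ i, Complex.normSq (v i) = 1) :
    M2 n (C * dm v * Cᴴ) = M2 n (dm v) := by
  obtain ⟨hU, hP⟩ := hC
  choose g s hs hEq using hP
  have hCC : Cᴴ * C = 1 := by
    have := hU.1
    rwa [Matrix.star_eq_conjTranspose] at this
  have hs2 : ∀ f, (s f : ℂ) * (s f : ℂ) = 1 := by
    intro f; rcases hs f with h | h <;> simp [h]
  have hback : ∀ f, pauliString n (g f) = (s f : ℂ) • (C * pauliString n f * Cᴴ) := by
    intro f
    rw [hEq f, smul_smul, hs2 f, one_smul]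
  have e5 : ∀ f : Fin n → Fin 4, Cᴴ * (C * pauliString n f * Cᴴ) * C = pauliString n f := by
    intro f
    calc Cᴴ * (C * pauliString n f * Cᴴ) * C
        = (Cᴴ * C) * pauliString n f * (Cᴴ * C) := by simp only [Matrix.mul_assoc]
      _ = pauliString n f := by rw [hCC]; simp
  have hinj : Function.Injective g := by
    intro f1 f2 h
    by_contra hne
    have a1 : C * pauliString n f1 * Cᴴ = (s f1 : ℂ) • pauliString n (g f2) := by
      rw [← h]; exact hEq f1
    have a2 : C * pauliString n f2 * Cᴴ = (s f2 : ℂ) • pauliString n (g f2) := hEq f2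
    have e3 : C * pauliString n f2 * Cᴴ
        = ((s f2 : ℂ) * (s f1 : ℂ)) • (C * pauliString n f1 * Cᴴ) := by
      rw [a2, a1, smul_smul]
      congr 1
      rw [mul_assoc, hs2 f1, mul_one]
    have e4 : pauliString n f2 = ((s f2 : ℂ) * (s f1 : ℂ)) • pauliString n f1 := by
      have := congrArg (fun M => Cᴴ * M * C) e3
      simp only [Matrix.mul_smul, Matrix.smul_mul, e5] at this
      exact this
    have := congrArg (fun M => (M * pauliString n f2).trace) e4
    simp only [Matrix.smul_mul, Matrix.trace_smul, trace_pauliString_mul, if_pos rfl,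
      if_neg (fun h' : f1 = f2 => hne h'), smul_zero, smul_eq_mul, mul_zero] at this
    exact pow_ne_zero n (two_ne_zero) this
  have hbij : Function.Bijective g := Finite.injective_iff_bijective.mp hinj
  have key : ∀ f, ‖(pauliString n (g f) * (C * dm v * Cᴴ)).trace‖
      = ‖(pauliString n f * dm v).trace‖ := by
    intro f
    have hmm : pauliString n (g f) * (C * dm v * Cᴴ)
        = (s f : ℂ) • (C * (pauliString n f * dm v) * Cᴴ) := by
      rw [hback f, Matrix.smul_mul]
      congr 1
      calc C * pauliString n f * Cᴴ * (C * dm v * Cᴴ)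
          = C * pauliString n f * (Cᴴ * C) * (dm v * Cᴴ) := by simp only [Matrix.mul_assoc]
        _ = C * (pauliString n f * dm v) * Cᴴ := by
            rw [hCC, Matrix.mul_one]; simp only [Matrix.mul_assoc]
    rw [hmm, Matrix.trace_smul]
    have htr : (C * (pauliString n f * dm v) * Cᴴ).trace = (pauliString n f * dm v).trace := by
      rw [Matrix.trace_mul_cycle, ← Matrix.mul_assoc, hCC, Matrix.one_mul]
    rw [htr, smul_eq_mul]
    rcases hs f with h' | h' <;> simp [h']
  unfold M2
  congr 3
  calc ∑ h : Fin n → Fin 4, ‖(pauliString n h * (C * dm v * Cᴴ)).trace‖ ^ 4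
      = ∑ f : Fin n → Fin 4, ‖(pauliString n (g f) * (C * dm v * Cᴴ)).trace‖ ^ 4 :=
        (Fintype.sum_bijective g hbij _ _ (fun _ => rfl)).symm
    _ = ∑ f : Fin n → Fin 4, ‖(pauliString n f * dm v).trace‖ ^ 4 := by
        simp only [key]
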